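/- Let H be a Hilbert space, Δt > 0, and (f^m)_{m∈ℕ} ⊂ H. Define the piecewise constant interpolant f^M(t) = f^m for t ∈ [(m−1)Δt, mΔt). Suppose for some q ∈ (0,1], c > 0 and integer k that ∫₀^{kΔt − s} ‖f^M(t+s) − f^M(t)‖²_H dt ≤ c s^q holds for all s = lΔt with l ∈ ℕ, l ≤ k. Then the same estimate ∫₀^{kΔt − s} ‖f^M(t+s) − f^M(t)‖²_H dt ≤ C s^q holds (with a possibly larger constant C depending only on c and q) for every real s with 0 < s < kΔt. -/

import Mathlib

open MeasureTheory

section stmt14aux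
variable {H : Type*} [NormedAddCommGroup H] [InnerProductSpace ℝ H]
variable {Δt : ℝ} {f : ℕ → H} {fM : ℝ → H}

lemma stmt14_cell (hΔ : 0 < Δt) {t : ℝ} (ht : 0 ≤ t) :
    (⌊t / Δt⌋₊ : ℝ) * Δt ≤ t ∧ t < ((⌊t / Δt⌋₊ : ℝ) + 1) * Δt := by
  have h1 : (⌊t / Δt⌋₊ : ℝ) ≤ t / Δt := Nat.floor_le (by positivity)
  have h2 : t / Δt < ⌊t / Δt⌋₊ + 1 := Nat.lt_floor_add_one _
  constructor
  · calc (⌊t / Δt⌋₊ : ℝ) * Δt ≤ (t / Δt) * Δt := by nlinarith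
      _ = t := by field_simp
  · calc t = (t / Δt) * Δt := by field_simp
      _ < ((⌊t / Δt⌋₊ : ℝ) + 1) * Δt := by nlinarith

lemma stmt14_fM
    (hfM : ∀ m : ℕ, 1 ≤ m → ∀ t ∈ Set.Ico (((m : ℝ) - 1) * Δt) ((m : ℝ) * Δt), fM t = f m)
    (m : ℕ) {t : ℝ} (h1 : (m : ℝ) * Δt ≤ t) (h2 : t < ((m : ℝ) + 1) * Δt) :
    fM t = f (m + 1) := by
  refine hfM (m + 1) (by omega) t ?_
  constructor <;> push_cast <;> linarith

lemma stmt14_int (hΔ : 0 < Δt)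
    (hfM : ∀ m : ℕ, 1 ≤ m → ∀ t ∈ Set.Ico (((m : ℝ) - 1) * Δt) ((m : ℝ) * Δt), fM t = f m)
    {σ : ℝ} (hσ : 0 ≤ σ) (T : ℝ) :
    IntegrableOn (fun t => ‖fM (t + σ) - fM t‖ ^ 2) (Set.Ioc 0 T) := by
  set F : ℕ × ℕ → ℝ := fun p => ‖f (p.1 + 1) - f (p.2 + 1)‖ ^ 2 with hF
  set ψ : ℝ → ℝ := fun t => F (⌊(t + σ) / Δt⌋₊, ⌊t / Δt⌋₊) with hψ
  have hmeas : Measurable ψ := by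
    apply (measurable_of_countable F).comp
    exact ((measurable_id.add_const σ).div_const Δt).nat_floor.prodMk
      ((measurable_id.div_const Δt).nat_floor)
  set K : ℕ := ⌊(T + σ) / Δt⌋₊ with hK
  set M : ℝ := ∑ p ∈ Finset.range (K + 1) ×ˢ Finset.range (K + 1), F p with hM
  have hbound : ∀ t ∈ Set.Ioc (0 : ℝ) T, ‖ψ t‖ ≤ M := by
    intro t ht
    have h0 : (0 : ℝ) ≤ ψ t := by positivity
    rw [Real.norm_of_nonneg h0]
    refine Finset.single_le_sum (f := F) (fun p _ => by positivity) ?_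
    have hf1 : ⌊(t + σ) / Δt⌋₊ ≤ K :=
      Nat.floor_le_floor (by gcongr; linarith [ht.2])
    have hf2 : ⌊t / Δt⌋₊ ≤ K :=
      Nat.floor_le_floor (by gcongr; linarith [ht.2])
    simp only [Finset.mem_product, Finset.mem_range]
    omega
  have hψint : IntegrableOn ψ (Set.Ioc 0 T) := by
    refine Integrable.mono' (g := fun _ => M)
      (integrableOn_const measure_Ioc_lt_top.ne)
      hmeas.aestronglyMeasurable.restrict ?_
    exact (ae_restrict_iff' measurableSet_Ioc).2 (Filter.Eventually.of_forall hbound)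
  refine hψint.congr_fun (fun t ht => ?_) measurableSet_Ioc
  have ht0 : (0 : ℝ) ≤ t := ht.1.le
  have hts : (0 : ℝ) ≤ t + σ := by linarith
  obtain ⟨c1, c2⟩ := stmt14_cell hΔ ht0
  obtain ⟨d1, d2⟩ := stmt14_cell hΔ hts
  rw [hψ]
  simp only [hF]
  rw [stmt14_fM hfM _ c1 c2, stmt14_fM hfM _ d1 d2]

lemma stmt14_const (hΔ : 0 < Δt)
    (hfM : ∀ m : ℕ, 1 ≤ m → ∀ t ∈ Set.Ico (((m : ℝ) - 1) * Δt) ((m : ℝ) * Δt), fM t = f m)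
    (m l : ℕ) {α β : ℝ} (hαβ : α ≤ β) (hα : (m : ℝ) * Δt ≤ α) (hβ : β ≤ ((m : ℝ) + 1) * Δt) :
    ∫ t in Set.Ioc α β, ‖fM (t + (l : ℝ) * Δt) - fM t‖ ^ 2
      = (β - α) * ‖f (m + l + 1) - f (m + 1)‖ ^ 2 := by
  have hae : ∀ᵐ t : ℝ, t ∈ Set.Ioc α β →
      ‖fM (t + (l : ℝ) * Δt) - fM t‖ ^ 2 = ‖f (m + l + 1) - f (m + 1)‖ ^ 2 := by
    have hβ0 : ∀ᵐ t : ℝ, t ≠ β := by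
      refine ae_iff.2 ?_
      simpa using volume_singleton (a := β)
    filter_upwards [hβ0] with t htβ htmem
    have h1 : (m : ℝ) * Δt ≤ t := le_trans hα htmem.1.le
    have h2 : t < ((m : ℝ) + 1) * Δt := lt_of_lt_of_le (lt_of_le_of_ne htmem.2 htβ) hβ
    have e1 : fM t = f (m + 1) := stmt14_fM hfM m h1 h2
    have e2 : fM (t + (l : ℝ) * Δt) = f (m + l + 1) := by
      have := stmt14_fM hfM (m + l) (t := t + (l : ℝ) * Δt)
        (by push_cast; linarith) (by push_cast; linarith)
      simpa [add_assoc] using this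
    rw [e1, e2]
  rw [setIntegral_congr_ae measurableSet_Ioc hae, setIntegral_const, Real.volume_real_Ioc_of_le hαβ,
    smul_eq_mul]

lemma stmt14_sum {g : ℝ → ℝ} (hg : ∀ T, IntegrableOn g (Set.Ioc 0 T))
    (hΔ : 0 < Δt) (N : ℕ) :
    ∫ t in Set.Ioc 0 ((N : ℝ) * Δt), g t
      = ∑ m ∈ Finset.range N, ∫ t in Set.Ioc ((m : ℝ) * Δt) (((m : ℝ) + 1) * Δt), g t := by
  induction N with
  | zero => simp
  | succ n ih =>
    rw [Finset.sum_range_succ, ← ih]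
    have hu : Set.Ioc (0 : ℝ) ((n : ℝ) * Δt) ∪ Set.Ioc ((n : ℝ) * Δt) (((n : ℝ) + 1) * Δt)
        = Set.Ioc 0 ((↑(n + 1) : ℝ) * Δt) := by
      push_cast
      refine Set.Ioc_union_Ioc_eq_Ioc ?_ ?_ <;> nlinarith
    rw [← hu, setIntegral_union (Set.Ioc_disjoint_Ioc_of_le le_rfl) measurableSet_Ioc
      ((hg _).mono_set (fun x hx => hx))
      ((hg _).mono_set (Set.Ioc_subset_Ioc_left (by positivity)))]

end stmt14aux

set_option maxHeartbeats 1600000 in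
/-- If the piecewise constant interpolant `f^M` (with step `Δt`) satisfies
`∫₀^{kΔt−s} ‖f^M(t+s) − f^M(t)‖² dt ≤ c s^q` for all translation lengths `s = lΔt`,
`l ∈ ℕ`, `l ≤ k`, then the same estimate (with a larger constant depending only on
`c` and `q`) holds for every real `0 < s < kΔt`. -/
theorem stmt14 {H : Type*} [NormedAddCommGroup H] [InnerProductSpace ℝ H]
    (q c : ℝ) (hq0 : 0 < q) (hq1 : q ≤ 1) (hc : 0 < c) :
    ∃ C : ℝ, 0 < C ∧
      ∀ (Δt : ℝ), 0 < Δt →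
      ∀ (f : ℕ → H) (fM : ℝ → H),
        (∀ m : ℕ, 1 ≤ m →
          ∀ t ∈ Set.Ico (((m : ℝ) - 1) * Δt) ((m : ℝ) * Δt), fM t = f m) →
      ∀ k : ℕ,
        (∀ l : ℕ, 1 ≤ l → l ≤ k →
          (∫ t in Set.Ioc 0 ((k : ℝ) * Δt - (l : ℝ) * Δt),
              ‖fM (t + (l : ℝ) * Δt) - fM t‖ ^ 2) ≤ c * ((l : ℝ) * Δt) ^ q) →
        ∀ s : ℝ, 0 < s → s < (k : ℝ) * Δt →
          (∫ t in Set.Ioc 0 ((k : ℝ) * Δt - s), ‖fM (t + s) - fM t‖ ^ 2) ≤ C * s ^ q := by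
  refine ⟨4 * c, by positivity, ?_⟩
  intro Δt hΔ f fM hfM k hI s hs hsk
  have hsq : (0:ℝ) ≤ s ^ q := Real.rpow_nonneg hs.le q
  set a : ℕ := ⌊s / Δt⌋₊ with ha
  obtain ⟨har1, har2⟩ := stmt14_cell hΔ hs.le
  rw [← ha] at har1 har2
  set r : ℝ := s - (a : ℝ) * Δt with hr
  have hs_eq : s = (a : ℝ) * Δt + r := by rw [hr]; ring
  have hr0 : 0 ≤ r := by rw [hr]; linarith
  have hrΔ : r < Δt := by rw [hr]; nlinarith
  have hak : a + 1 ≤ k := by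
    by_contra hcon
    push_neg at hcon
    have : (k : ℝ) ≤ (a : ℝ) := by exact_mod_cast Nat.le_of_lt_succ hcon
    nlinarith
  set D : Set ℝ := Set.Ioc 0 ((k : ℝ) * Δt - s) with hD
  have hhint : IntegrableOn (fun t => ‖fM (t + s) - fM t‖ ^ 2) D :=
    stmt14_int hΔ hfM hs.le _
  -- null set of cell boundaries and crossing points
  set Z : Set ℝ := Set.range (fun m : ℕ => (m : ℝ) * Δt)
      ∪ Set.range (fun m : ℕ => ((m : ℝ) + 1) * Δt - r) with hZdef
  have hZ : volume Z = 0 :=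
    Set.Countable.measure_zero ((Set.countable_range _).union (Set.countable_range _)) _
  have hZae : ∀ᵐ t : ℝ, t ∉ Z := by
    rw [ae_iff]; simpa using hZ
  rcases Nat.eq_zero_or_pos a with ha0 | ha1
  · -- case a = 0 : s < Δt
    have hrs : r = s := by rw [hr, ha0]; push_cast; ring
    have hsΔ : s < Δt := hrs ▸ hrΔ
    have h1k : 1 ≤ k := by omega
    set g1 : ℝ → ℝ := fun t => ‖fM (t + ((1:ℕ) : ℝ) * Δt) - fM t‖ ^ 2 with hg1
    have hg1int : ∀ T, IntegrableOn g1 (Set.Ioc 0 T) := fun T =>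
      stmt14_int hΔ hfM (by positivity) T
    set G : ℕ → ℝ := fun m => ‖f (m + 1 + 1) - f (m + 1)‖ ^ 2 with hG
    set J : ℕ → Set ℝ := fun m => Set.Ioc (((m : ℝ) + 1) * Δt - s) (((m : ℝ) + 1) * Δt) with hJ
    set φ : ℝ → ℝ := fun t => ∑ m ∈ Finset.range (k - 1), (J m).indicator g1 t with hφ
    have hJsubD : ∀ m ∈ Finset.range (k - 1), J m ⊆ D := by
      intro m hm x hx
      have hm' : m + 2 ≤ k := by have := Finset.mem_range.1 hm; omega
      have hmk : (m : ℝ) + 2 ≤ (k : ℝ) := by exact_mod_cast hm'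
      have hm0 : (0:ℝ) ≤ (m:ℝ) := Nat.cast_nonneg m
      constructor
      · have := hx.1; nlinarith
      · have := hx.2; nlinarith
    have hφint : Integrable φ (volume.restrict D) := by
      apply integrable_finset_sum
      intro m hm
      exact (hg1int _).indicator measurableSet_Ioc
    have hptwise : ∀ᵐ t : ℝ, t ∈ D → ‖fM (t + s) - fM t‖ ^ 2 ≤ φ t := by
      filter_upwards [hZae] with t htZ htD
      have ht0 : (0:ℝ) ≤ t := htD.1.le
      obtain ⟨c1, c2⟩ := stmt14_cell hΔ ht0
      set m : ℕ := ⌊t / Δt⌋₊ with hm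
      have hφ0 : 0 ≤ φ t := by
        apply Finset.sum_nonneg
        intro i _
        exact Set.indicator_nonneg (fun x _ => by positivity) t
      by_cases hlt : t + s < ((m : ℝ) + 1) * Δt
      · have e1 : fM t = f (m + 1) := stmt14_fM hfM m c1 c2
        have e2 : fM (t + s) = f (m + 1) :=
          stmt14_fM hfM m (by linarith) hlt
        rw [e1, e2]
        simpa using hφ0
      · push_neg at hlt
        have hne2 : t ≠ ((m : ℝ) + 1) * Δt - s := by
          intro h
          refine htZ (Or.inr ⟨m, ?_⟩)
          show ((m : ℝ) + 1) * Δt - r = t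
          rw [hrs]
          exact h.symm
        have hgt : ((m : ℝ) + 1) * Δt - s < t :=
          lt_of_le_of_ne (by linarith) (Ne.symm hne2)
        have e1 : fM t = f (m + 1) := stmt14_fM hfM m c1 c2
        have e2 : fM (t + s) = f (m + 1 + 1) := by
          have := stmt14_fM hfM (m + 1) (t := t + s)
            (by push_cast; linarith) (by push_cast; linarith)
          simpa using this
        have e3 : fM (t + ((1:ℕ) : ℝ) * Δt) = f (m + 1 + 1) := by
          have := stmt14_fM hfM (m + 1) (t := t + ((1:ℕ) : ℝ) * Δt)
            (by push_cast; linarith) (by push_cast; linarith)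
          simpa using this
        have hmk : m ∈ Finset.range (k - 1) := by
          have hmkR : ((m : ℝ) + 1) * Δt < (k : ℝ) * Δt := by
            have := htD.2; nlinarith
          have : (m : ℝ) + 1 < (k : ℝ) := by nlinarith
          have : m + 1 < k := by exact_mod_cast this
          simp only [Finset.mem_range]; omega
        have htJ : t ∈ J m := ⟨hgt, c2.le⟩
        calc ‖fM (t + s) - fM t‖ ^ 2 = (J m).indicator g1 t := by
              rw [Set.indicator_of_mem htJ]
              simp only [hg1]
              rw [e1, e2, e3]
          _ ≤ φ t := Finset.single_le_sum
              (f := fun i => (J i).indicator g1 t)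
              (fun i _ => Set.indicator_nonneg (fun x _ => by positivity) t) hmk
    have step1 : ∫ t in D, ‖fM (t + s) - fM t‖ ^ 2 ≤ ∫ t in D, φ t :=
      setIntegral_mono_ae_restrict hhint hφint
        ((ae_restrict_iff' measurableSet_Ioc).2 hptwise)
    have step2 : ∫ t in D, φ t = ∑ m ∈ Finset.range (k - 1), s * G m := by
      rw [hφ, integral_finset_sum _ (fun m _ => (hg1int _).indicator measurableSet_Ioc)]
      refine Finset.sum_congr rfl (fun m hm => ?_)
      rw [setIntegral_indicator measurableSet_Ioc,
        Set.inter_eq_self_of_subset_right (hJsubD m hm)]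
      have hc' := stmt14_const hΔ hfM m 1 (α := ((m : ℝ) + 1) * Δt - s) (β := ((m : ℝ) + 1) * Δt)
        (by linarith) (by nlinarith) (le_refl _)
      simp only [hJ, hg1, hG]
      rw [hc']
      push_cast
      ring_nf
    have step3 : ∑ m ∈ Finset.range (k - 1), Δt * G m ≤ c * (((1:ℕ) : ℝ) * Δt) ^ q := by
      have hIk := hI 1 le_rfl h1k
      have hcast : (k : ℝ) * Δt - ((1:ℕ) : ℝ) * Δt = ((↑(k - 1) : ℝ)) * Δt := by
        rw [Nat.cast_sub h1k]; push_cast; ring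
      rw [hcast, stmt14_sum (g := fun t => ‖fM (t + ((1:ℕ) : ℝ) * Δt) - fM t‖ ^ 2)
        hg1int hΔ (k - 1)] at hIk
      refine le_trans (le_of_eq ?_) hIk
      refine Finset.sum_congr rfl (fun m hm => ?_)
      have hc' := stmt14_const hΔ hfM m 1 (α := (m : ℝ) * Δt) (β := ((m : ℝ) + 1) * Δt)
        (by nlinarith [Nat.cast_nonneg (α := ℝ) m, hΔ.le]) (le_refl _) (le_refl _)
      simp only [hG]
      rw [hc']
      push_cast
      ring_nf
    have step4 : ∑ m ∈ Finset.range (k - 1), s * G m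
        = (s / Δt) * ∑ m ∈ Finset.range (k - 1), Δt * G m := by
      rw [Finset.mul_sum]
      refine Finset.sum_congr rfl (fun m _ => ?_)
      field_simp
    have step5 : (s / Δt) * (c * (((1:ℕ) : ℝ) * Δt) ^ q) ≤ c * s ^ q := by
      rw [Nat.cast_one, one_mul]
      have hΔq : Δt ^ (q - 1) ≤ s ^ (q - 1) :=
        Real.rpow_le_rpow_of_nonpos hs hsΔ.le (by linarith)
      have hΔdiv : Δt ^ q / Δt = Δt ^ (q - 1) := by
        rw [Real.rpow_sub hΔ, Real.rpow_one]
      have hsplit : s ^ (q - 1) * s = s ^ q := by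
        rw [← Real.rpow_add_one hs.ne' (q - 1)]
        ring_nf
      calc (s / Δt) * (c * Δt ^ q) = c * (s * (Δt ^ q / Δt)) := by ring
        _ = c * (s * Δt ^ (q - 1)) := by rw [hΔdiv]
        _ ≤ c * (s * s ^ (q - 1)) := by gcongr
        _ = c * s ^ q := by rw [← hsplit]; ring
    have hsΔ0 : 0 ≤ s / Δt := by positivity
    calc ∫ t in D, ‖fM (t + s) - fM t‖ ^ 2 ≤ ∑ m ∈ Finset.range (k - 1), s * G m :=
          step1.trans (le_of_eq step2)
      _ = (s / Δt) * ∑ m ∈ Finset.range (k - 1), Δt * G m := step4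
      _ ≤ (s / Δt) * (c * (((1:ℕ) : ℝ) * Δt) ^ q) := by
          exact mul_le_mul_of_nonneg_left step3 hsΔ0
      _ ≤ c * s ^ q := step5
      _ ≤ 4 * c * s ^ q := by nlinarith
  · -- case 1 ≤ a
    have h1a : (1:ℝ) ≤ (a:ℝ) := by exact_mod_cast ha1
    have hak' : a ≤ k := by omega
    have hsub1 : s ≤ ((a:ℝ) + 1) * Δt := har2.le
    set E : Set ℝ := Set.Ioc (0:ℝ) ((k:ℝ) * Δt - (↑(a + 1) : ℝ) * Δt) with hE
    have hEsubD : E ⊆ D := by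
      apply Set.Ioc_subset_Ioc_right
      push_cast
      linarith
    have hgaintD : IntegrableOn (fun t => ‖fM (t + (a:ℝ) * Δt) - fM t‖ ^ 2) D :=
      stmt14_int hΔ hfM (by positivity) _
    have hga1intD : IntegrableOn (fun t => ‖fM (t + (↑(a + 1) : ℝ) * Δt) - fM t‖ ^ 2) D :=
      stmt14_int hΔ hfM (by positivity) _
    have hptwise : ∀ᵐ t : ℝ, t ∈ D → ‖fM (t + s) - fM t‖ ^ 2 ≤
        ‖fM (t + (a:ℝ) * Δt) - fM t‖ ^ 2
          + E.indicator (fun t => ‖fM (t + (↑(a + 1) : ℝ) * Δt) - fM t‖ ^ 2) t := by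
      filter_upwards [hZae] with t htZ htD
      have ht0 : (0:ℝ) ≤ t := htD.1.le
      obtain ⟨c1, c2⟩ := stmt14_cell hΔ ht0
      set m : ℕ := ⌊t / Δt⌋₊ with hm
      have hind0 : 0 ≤ E.indicator (fun t => ‖fM (t + (↑(a + 1) : ℝ) * Δt) - fM t‖ ^ 2) t :=
        Set.indicator_nonneg (fun x _ => by positivity) t
      by_cases hlt : t < ((m : ℝ) + 1) * Δt - r
      · have e2 : fM (t + s) = f (m + a + 1) := by
          have := stmt14_fM hfM (m + a) (t := t + s)
            (by push_cast; linarith) (by push_cast; linarith)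
          simpa [add_assoc] using this
        have e3 : fM (t + (a:ℝ) * Δt) = f (m + a + 1) := by
          have := stmt14_fM hfM (m + a) (t := t + (a:ℝ) * Δt)
            (by push_cast; linarith) (by push_cast; linarith)
          simpa [add_assoc] using this
        rw [e2, ← e3]
        linarith
      · push_neg at hlt
        have hne2 : t ≠ ((m : ℝ) + 1) * Δt - r := by
          intro h
          exact htZ (Or.inr ⟨m, h.symm⟩)
        have hgt : ((m : ℝ) + 1) * Δt - r < t := lt_of_le_of_ne hlt (Ne.symm hne2)
        have e2 : fM (t + s) = f (m + a + 1 + 1) := by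
          have := stmt14_fM hfM (m + a + 1) (t := t + s)
            (by push_cast; linarith) (by push_cast; linarith)
          simpa [add_assoc] using this
        have e3 : fM (t + (↑(a + 1) : ℝ) * Δt) = f (m + a + 1 + 1) := by
          have := stmt14_fM hfM (m + a + 1) (t := t + (↑(a + 1) : ℝ) * Δt)
            (by push_cast; linarith) (by push_cast; linarith)
          simpa [add_assoc] using this
        have hm2 : m + a + 2 ≤ k := by
          have h1 : t ≤ (k : ℝ) * Δt - s := htD.2
          have h2 : ((m : ℝ) + 1) * Δt < (k : ℝ) * Δt - (a : ℝ) * Δt := by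
            nlinarith
          have h3 : (m : ℝ) + 1 + (a : ℝ) < (k : ℝ) := by nlinarith
          have h4 : m + 1 + a < k := by exact_mod_cast h3
          omega
        have htE : t ∈ E := by
          constructor
          · exact htD.1
          · have : ((m : ℝ) + 1) * Δt ≤ ((k : ℝ) - (a : ℝ) - 1) * Δt := by
              have : (m : ℝ) + (a : ℝ) + 2 ≤ (k : ℝ) := by exact_mod_cast hm2
              nlinarith
            push_cast
            nlinarith [c2]
        have hindeq : E.indicator (fun t => ‖fM (t + (↑(a + 1) : ℝ) * Δt) - fM t‖ ^ 2) t
            = ‖fM (t + s) - fM t‖ ^ 2 := by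
          rw [Set.indicator_of_mem htE]
          rw [e2, e3]
        rw [hindeq]
        have : 0 ≤ ‖fM (t + (a:ℝ) * Δt) - fM t‖ ^ 2 := by positivity
        linarith
    have step1 : ∫ t in D, ‖fM (t + s) - fM t‖ ^ 2
        ≤ ∫ t in D, (‖fM (t + (a:ℝ) * Δt) - fM t‖ ^ 2
          + E.indicator (fun t => ‖fM (t + (↑(a + 1) : ℝ) * Δt) - fM t‖ ^ 2) t) :=
      setIntegral_mono_ae_restrict hhint
        (hgaintD.add (hga1intD.indicator measurableSet_Ioc))
        ((ae_restrict_iff' measurableSet_Ioc).2 hptwise)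
    have step2 : ∫ t in D, (‖fM (t + (a:ℝ) * Δt) - fM t‖ ^ 2
          + E.indicator (fun t => ‖fM (t + (↑(a + 1) : ℝ) * Δt) - fM t‖ ^ 2) t)
        = (∫ t in D, ‖fM (t + (a:ℝ) * Δt) - fM t‖ ^ 2)
          + ∫ t in D, E.indicator (fun t => ‖fM (t + (↑(a + 1) : ℝ) * Δt) - fM t‖ ^ 2) t :=
      integral_add hgaintD (hga1intD.indicator measurableSet_Ioc)
    have step3 : (∫ t in D, ‖fM (t + (a:ℝ) * Δt) - fM t‖ ^ 2)
        ≤ ∫ t in Set.Ioc 0 ((k:ℝ) * Δt - (a:ℝ) * Δt), ‖fM (t + (a:ℝ) * Δt) - fM t‖ ^ 2 := by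
      refine setIntegral_mono_set (stmt14_int hΔ hfM (by positivity) _)
        (Filter.Eventually.of_forall (fun t => by positivity)) ?_
      exact (Set.Ioc_subset_Ioc_right (by linarith)).eventuallyLE
    have step4 : (∫ t in D, E.indicator
          (fun t => ‖fM (t + (↑(a + 1) : ℝ) * Δt) - fM t‖ ^ 2) t)
        = ∫ t in Set.Ioc 0 ((k:ℝ) * Δt - (↑(a + 1) : ℝ) * Δt),
            ‖fM (t + (↑(a + 1) : ℝ) * Δt) - fM t‖ ^ 2 := by
      rw [setIntegral_indicator measurableSet_Ioc,
        Set.inter_eq_self_of_subset_right hEsubD]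
    have hIa := hI a ha1 hak'
    have hIa1 := hI (a + 1) (by omega) hak
    have hx1 : (a:ℝ) * Δt ≤ 2 * s := by linarith
    have hx2 : (↑(a + 1) : ℝ) * Δt ≤ 2 * s := by push_cast; nlinarith
    have h2q : ((2:ℝ) * s) ^ q ≤ 2 * s ^ q := by
      rw [Real.mul_rpow (by norm_num) hs.le]
      have h2 : (2:ℝ) ^ q ≤ (2:ℝ) ^ (1:ℝ) :=
        Real.rpow_le_rpow_of_exponent_le one_le_two hq1
      rw [Real.rpow_one] at h2
      nlinarith
    have hnum1 : c * ((a:ℝ) * Δt) ^ q ≤ 2 * c * s ^ q := by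
      have h1 : ((a:ℝ) * Δt) ^ q ≤ (2 * s) ^ q :=
        Real.rpow_le_rpow (by positivity) hx1 hq0.le
      nlinarith
    have hnum2 : c * ((↑(a + 1) : ℝ) * Δt) ^ q ≤ 2 * c * s ^ q := by
      have h1 : ((↑(a + 1) : ℝ) * Δt) ^ q ≤ (2 * s) ^ q :=
        Real.rpow_le_rpow (by positivity) hx2 hq0.le
      nlinarith
    calc ∫ t in D, ‖fM (t + s) - fM t‖ ^ 2
        ≤ (∫ t in D, ‖fM (t + (a:ℝ) * Δt) - fM t‖ ^ 2)
          + ∫ t in D, E.indicator (fun t => ‖fM (t + (↑(a + 1) : ℝ) * Δt) - fM t‖ ^ 2) t :=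
          step1.trans (le_of_eq step2)
      _ ≤ c * ((a:ℝ) * Δt) ^ q + c * ((↑(a + 1) : ℝ) * Δt) ^ q :=
          add_le_add (step3.trans hIa) ((le_of_eq step4).trans hIa1)
      _ ≤ 4 * c * s ^ q := by nlinarith
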